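/- Let I + S be a packing of ℝ^d by unit cubes and u ∉ S. If I + u ⊆ ⋃_{s ∈ S}(I + s), then there exist t, t' ∈ S such that t - t' ∈ {-1,0,1}^d and the number of indices i with |t_i - t'_i| = 1 is odd. -/

import Mathlib

/-- The translate of the half-open unit cube `[0,1)^d` by `t`. -/
def cube {d : ℕ} (t : Fin d → ℝ) : Set (Fin d → ℝ) :=
  {x | ∀ i, t i ≤ x i ∧ x i < t i + 1}

namespace Stmt4Aux

/-- The "endpoint value" of an offset `δ ∈ (-1,1)`. -/
noncomputable def ev (δ : ℝ) : ℝ := if δ ≤ 0 then δ + 1 else δ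

/-- The sign of an offset. -/
noncomputable def sg (δ : ℝ) : ℝ := if δ ≤ 0 then 1 else -1

lemma sg_mul_self (a : ℝ) : sg a * sg a = 1 := by
  unfold sg; split <;> norm_num

lemma ev_eq_cases (a b : ℝ) (h : ev a = ev b) :
    (a - b = 0 ∧ sg a = sg b) ∨ ((a - b = 1 ∨ a - b = -1) ∧ sg a * sg b = -1) := by
  unfold ev sg at *
  rcases le_or_gt a 0 with ha | ha <;> rcases le_or_gt b 0 with hb | hb
  · rw [if_pos ha, if_pos hb] at h
    left
    rw [if_pos ha, if_pos hb]
    exact ⟨by linarith, rfl⟩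
  · rw [if_pos ha, if_neg (not_le.mpr hb)] at h
    right
    rw [if_pos ha, if_neg (not_le.mpr hb)]
    exact ⟨Or.inr (by linarith), by norm_num⟩
  · rw [if_neg (not_le.mpr ha), if_pos hb] at h
    right
    rw [if_neg (not_le.mpr ha), if_pos hb]
    exact ⟨Or.inl (by linarith), by norm_num⟩
  · rw [if_neg (not_le.mpr ha), if_neg (not_le.mpr hb)] at h
    left
    rw [if_neg (not_le.mpr ha), if_neg (not_le.mpr hb)]
    exact ⟨by linarith, rfl⟩

lemma eval_factor (ui si mm : ℝ) (hδr : si - ui < 1) (hm0 : 0 ≤ mm) (hm1 : mm < 1)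
    (hme : ev (si - ui) < 1 → ev (si - ui) ≤ mm) :
    (if si ≤ ui + mm ∧ ui + mm < si + 1 then (1:ℝ) else 0)
      = (if 0 ≤ si - ui then 1 else 0) := by
  by_cases h0 : 0 ≤ si - ui
  · rw [if_pos h0]
    rcases eq_or_lt_of_le h0 with heq | hlt
    · rw [if_pos ⟨by linarith, by linarith⟩]
    · have hev : ev (si - ui) = si - ui := if_neg (not_le.mpr hlt)
      have h1 := hme (by rw [hev]; exact hδr)
      rw [hev] at h1
      rw [if_pos ⟨by linarith, by linarith⟩]
  · rw [if_neg h0]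
    push_neg at h0
    have hev : ev (si - ui) = si - ui + 1 := if_pos (le_of_lt h0)
    have hle := hme (by rw [hev]; linarith)
    rw [hev] at hle
    rw [if_neg]
    rintro ⟨h1, h2⟩
    linarith

lemma diff_factor (ui si pp yy : ℝ) (hδl : -1 < si - ui) (hδr : si - ui < 1)
    (hp0 : 0 ≤ pp) (hpy : pp < yy) (hy1 : yy < 1) (hy0 : 0 < yy)
    (hpm : ev (si - ui) < yy → ev (si - ui) ≤ pp) :
    ((if si ≤ ui + pp ∧ ui + pp < si + 1 then (1:ℝ) else 0)
      + (if si ≤ ui + yy ∧ ui + yy < si + 1 then (-1:ℝ) else 0))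
      = (if ev (si - ui) = yy then sg (si - ui) else 0) := by
  by_cases hs : si - ui ≤ 0
  · have hev : ev (si - ui) = si - ui + 1 := if_pos hs
    have hsg : sg (si - ui) = 1 := if_pos hs
    rw [hev, hsg]
    rw [hev] at hpm
    by_cases he : si - ui + 1 = yy
    · rw [if_pos he]
      rw [if_pos ⟨by linarith, by linarith⟩]
      rw [if_neg (by rintro ⟨-, h2⟩; linarith)]
      norm_num
    · rw [if_neg he]
      rcases lt_or_gt_of_ne he with hlt | hgt
      · have hle := hpm hlt
        rw [if_neg (by rintro ⟨-, h2⟩; linarith)]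
        rw [if_neg (by rintro ⟨-, h2⟩; linarith)]
        norm_num
      · rw [if_pos ⟨by linarith, by linarith⟩]
        rw [if_pos ⟨by linarith, by linarith⟩]
        norm_num
  · push_neg at hs
    have hev : ev (si - ui) = si - ui := if_neg (not_le.mpr hs)
    have hsg : sg (si - ui) = -1 := if_neg (not_le.mpr hs)
    rw [hev, hsg]
    rw [hev] at hpm
    by_cases he : si - ui = yy
    · rw [if_pos he]
      rw [if_neg (by rintro ⟨h1, -⟩; linarith)]
      rw [if_pos ⟨by linarith, by linarith⟩]
      norm_num
    · rw [if_neg he]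
      rcases lt_or_gt_of_ne he with hlt | hgt
      · have hle := hpm hlt
        rw [if_pos ⟨by linarith, by linarith⟩]
        rw [if_pos ⟨by linarith, by linarith⟩]
        norm_num
      · rw [if_neg (by rintro ⟨h1, -⟩; linarith)]
        rw [if_neg (by rintro ⟨h1, -⟩; linarith)]
        norm_num

/-- Master grid identity: evaluating the exact cover `C` on a finite product grid
inside `cube u` and factoring per coordinate. -/
lemma master {d : ℕ} (u : Fin d → ℝ) (T : Finset (Fin d → ℝ))
    (C : (Fin d → ℝ) → (Fin d → ℝ))
    (hC1 : ∀ x ∈ cube u, x ∈ cube (C x))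
    (hCT : ∀ x ∈ cube u, C x ∈ T)
    (huniq : ∀ x ∈ cube u, ∀ s ∈ T, x ∈ cube s → C x = s)
    (P : Fin d → Finset ℝ) (c : Fin d → ℝ → ℝ)
    (hP : ∀ i, ∀ x ∈ P i, u i ≤ x ∧ x < u i + 1) :
    (∏ i, ∑ x ∈ P i, c i x)
      = ∑ s ∈ T, ∏ i, ∑ x ∈ (P i).filter (fun x => s i ≤ x ∧ x < s i + 1), c i x := by
  classical
  have hmem : ∀ p, (∀ i, p i ∈ P i) → p ∈ cube u := by
    intro p hp
    intro i
    exact hP i _ (hp i)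
  rw [Finset.prod_univ_sum]
  rw [← Finset.sum_fiberwise_of_maps_to (g := C)
      (fun p hp => hCT p (hmem p (Fintype.mem_piFinset.mp hp)))
      (fun p => ∏ i, c i (p i))]
  refine Finset.sum_congr rfl fun s hs => ?_
  have hfe : (Fintype.piFinset P).filter (fun p => C p = s)
      = Fintype.piFinset (fun i => (P i).filter fun x => s i ≤ x ∧ x < s i + 1) := by
    ext p
    simp only [Finset.mem_filter, Fintype.mem_piFinset]
    constructor
    · rintro ⟨hp, hCp⟩ i
      refine ⟨hp i, ?_⟩
      have h2 := hC1 p (hmem p hp) i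
      rwa [hCp] at h2
    · intro h
      have hp : ∀ i, p i ∈ P i := fun i => (h i).1
      have hpc : p ∈ cube s := fun i => (h i).2
      exact ⟨hp, huniq p (hmem p hp) s hs hpc⟩
  rw [hfe, ← Finset.prod_univ_sum]

/-- The key identity for any `Z ⊊ [d]` and targets `y`. -/
lemma ident {d : ℕ} (u : Fin d → ℝ) (T : Finset (Fin d → ℝ))
    (C : (Fin d → ℝ) → (Fin d → ℝ))
    (hC1 : ∀ x ∈ cube u, x ∈ cube (C x))
    (hCT : ∀ x ∈ cube u, C x ∈ T)
    (huniq : ∀ x ∈ cube u, ∀ s ∈ T, x ∈ cube s → C x = s)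
    (hTb : ∀ s ∈ T, ∀ i, u i - 1 < s i ∧ s i < u i + 1)
    (Z : Finset (Fin d)) (hZ : Z ≠ Finset.univ)
    (y : Fin d → ℝ) (hy : ∀ i, i ∉ Z → 0 < y i ∧ y i < 1) :
    ∑ s ∈ T, (∏ i, (if i ∈ Z then (if 0 ≤ s i - u i then (1:ℝ) else 0)
        else (if ev (s i - u i) = y i then sg (s i - u i) else 0))) = 0 := by
  classical
  have hm : ∀ i : Fin d, ∃ mm : ℝ, 0 ≤ mm ∧ mm < 1 ∧
      ∀ e ∈ T.image (fun s => ev (s i - u i)), e < 1 → e ≤ mm := by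
    intro i
    refine ⟨(insert (0:ℝ) (((T.image fun s => ev (s i - u i))).filter fun z => z < 1)).max'
      (Finset.insert_nonempty _ _), ?_, ?_, ?_⟩
    · exact Finset.le_max' _ _ (Finset.mem_insert_self _ _)
    · rw [Finset.max'_lt_iff]
      intro b hb
      rcases Finset.mem_insert.mp hb with h | h
      · rw [h]; norm_num
      · exact (Finset.mem_filter.mp h).2
    · intro e hei he1
      apply Finset.le_max'
      apply Finset.mem_insert_of_mem
      rw [Finset.mem_filter]
      exact ⟨hei, he1⟩
  choose m hm0 hm1 hmax using hm
  have hpws : ∀ i : Fin d, ∃ pp : ℝ, 0 ≤ pp ∧ (i ∉ Z → pp < y i) ∧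
      ∀ e ∈ T.image (fun s => ev (s i - u i)), e < y i → e ≤ pp := by
    intro i
    refine ⟨(insert (0:ℝ) (((T.image fun s => ev (s i - u i))).filter fun z => z < y i)).max'
      (Finset.insert_nonempty _ _), ?_, ?_, ?_⟩
    · exact Finset.le_max' _ _ (Finset.mem_insert_self _ _)
    · intro hiZ
      rw [Finset.max'_lt_iff]
      intro b hb
      rcases Finset.mem_insert.mp hb with h | h
      · rw [h]; exact (hy i hiZ).1
      · exact (Finset.mem_filter.mp h).2
    · intro e hei he1
      apply Finset.le_max'
      apply Finset.mem_insert_of_mem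
      rw [Finset.mem_filter]
      exact ⟨hei, he1⟩
  choose p hp0 hp1 hpmax using hpws
  set P : Fin d → Finset ℝ :=
    fun i => if i ∈ Z then {u i + m i} else {u i + p i, u i + y i} with hPdef
  set c : Fin d → ℝ → ℝ :=
    fun i x => if i ∈ Z then 1 else (if x = u i + p i then 1 else -1) with hcdef
  have hne : ∀ i, i ∉ Z → u i + p i ≠ u i + y i := by
    intro i hiZ h
    exact (ne_of_lt (hp1 i hiZ)) (add_left_cancel h)
  have hPb : ∀ i, ∀ x ∈ P i, u i ≤ x ∧ x < u i + 1 := by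
    intro i x hx
    simp only [hPdef] at hx
    by_cases hiZ : i ∈ Z
    · rw [if_pos hiZ, Finset.mem_singleton] at hx
      rw [hx]
      constructor
      · linarith [hm0 i]
      · linarith [hm1 i]
    · rw [if_neg hiZ, Finset.mem_insert, Finset.mem_singleton] at hx
      have hyi := hy i hiZ
      have hp1' := hp1 i hiZ
      rcases hx with h | h <;> rw [h] <;> constructor <;> linarith [hp0 i]
  have hfac : ∀ s ∈ T, ∀ i : Fin d,
      (if i ∈ Z then (if 0 ≤ s i - u i then (1:ℝ) else 0)
        else (if ev (s i - u i) = y i then sg (s i - u i) else 0))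
      = ∑ x ∈ (P i).filter (fun x => s i ≤ x ∧ x < s i + 1), c i x := by
    intro s hs i
    have hb := hTb s hs i
    have hbl : -1 < s i - u i := by linarith [hb.1]
    have hbr : s i - u i < 1 := by linarith [hb.2]
    have he : ev (s i - u i) ∈ T.image (fun t => ev (t i - u i)) :=
      Finset.mem_image_of_mem _ hs
    by_cases hiZ : i ∈ Z
    · simp only [hPdef, hcdef, if_pos hiZ]
      rw [Finset.sum_filter, Finset.sum_singleton]
      exact (eval_factor (u i) (s i) (m i) hbr (hm0 i) (hm1 i) (fun h => hmax i _ he h)).symm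
    · simp only [hPdef, hcdef, if_neg hiZ]
      rw [Finset.sum_filter, Finset.sum_pair (hne i hiZ)]
      have e1 : (if (u i + p i) = u i + p i then (1:ℝ) else -1) = 1 := if_pos rfl
      have e2 : (if (u i + y i) = u i + p i then (1:ℝ) else -1) = -1 :=
        if_neg (fun h => (hne i hiZ) h.symm)
      rw [e1, e2]
      exact (diff_factor (u i) (s i) (p i) (y i) hbl hbr (hp0 i) (hp1 i hiZ)
        (hy i hiZ).2 (hy i hiZ).1 (fun h => hpmax i _ he h)).symm
  have hmain := master u T C hC1 hCT huniq P c hPb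
  calc ∑ s ∈ T, (∏ i, (if i ∈ Z then (if 0 ≤ s i - u i then (1:ℝ) else 0)
        else (if ev (s i - u i) = y i then sg (s i - u i) else 0)))
      = ∑ s ∈ T, ∏ i, ∑ x ∈ (P i).filter (fun x => s i ≤ x ∧ x < s i + 1), c i x :=
        Finset.sum_congr rfl (fun s hs => Finset.prod_congr rfl (fun i _ => hfac s hs i))
    _ = ∏ i, ∑ x ∈ P i, c i x := hmain.symm
    _ = 0 := by
        obtain ⟨i0, hi0⟩ : ∃ i, i ∉ Z := by
          by_contra hall
          push_neg at hall
          exact hZ (Finset.eq_univ_iff_forall.mpr hall)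
        apply Finset.prod_eq_zero (Finset.mem_univ i0)
        simp only [hPdef, hcdef, if_neg hi0]
        rw [Finset.sum_pair (hne i0 hi0)]
        rw [if_pos rfl, if_neg (fun h => (hne i0 hi0) h.symm)]
        norm_num

end Stmt4Aux

open Stmt4Aux
theorem stmt_4 {d : ℕ} (S : Set (Fin d → ℝ))
    (hpack : ∀ s ∈ S, ∀ s' ∈ S, s ≠ s' → Disjoint (cube s) (cube s'))
    (u : Fin d → ℝ) (hu : u ∉ S)
    (hcover : cube u ⊆ ⋃ s ∈ S, cube s) :
    ∃ t ∈ S, ∃ t' ∈ S, (∀ i, t i - t' i ∈ ({-1, 0, 1} : Set ℝ)) ∧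
      Odd (Finset.univ.filter (fun i => |t i - t' i| = 1)).card := by
  classical
  by_contra Hc
  push_neg at Hc
  have hcu : ∀ x, x ∈ cube u → ∃ s, s ∈ S ∧ x ∈ cube s := by
    intro x hx
    have h := hcover hx
    simp only [Set.mem_iUnion] at h
    obtain ⟨s, hs, hxs⟩ := h
    exact ⟨s, hs, hxs⟩
  choose! C hCS hCc using hcu
  have huC : u ∈ cube u := by
    intro i
    exact ⟨le_refl _, by linarith⟩
  have huniq : ∀ x, x ∈ cube u → ∀ s, s ∈ S → x ∈ cube s → C x = s := by
    intro x hx s hsS hxs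
    by_contra hne
    exact Set.disjoint_left.mp (hpack _ (hCS x hx) _ hsS hne) (hCc x hx) hxs
  have hTfin : Set.Finite {s | s ∈ S ∧ ∃ x, x ∈ cube s ∧ x ∈ cube u} := by
    have key : ∀ s ∈ {s | s ∈ S ∧ ∃ x, x ∈ cube s ∧ x ∈ cube u},
        (fun i => if u i < s i then u i + 1 else u i) ∈ cube s := by
      rintro s ⟨-, x, hxs, hxu⟩
      intro i
      obtain ⟨h1, h2⟩ := hxs i
      obtain ⟨h3, h4⟩ := hxu i
      by_cases h : u i < s i
      · simp only [if_pos h]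
        constructor <;> linarith
      · simp only [if_neg h]
        push_neg at h
        constructor <;> linarith
    apply Set.Finite.of_finite_image
      (f := fun s => (fun i => decide (u i < s i) : Fin d → Bool))
    · exact Set.toFinite _
    · intro s hs s' hs' hss
      by_contra hne
      have h1 := key s hs
      have h2 := key s' hs'
      have heq : (fun i => if u i < s i then u i + 1 else u i)
          = (fun i => if u i < s' i then u i + 1 else u i) := by
        funext i
        have hdec := congrFun hss i
        simp only at hdec
        rw [decide_eq_decide] at hdec
        by_cases h : u i < s i
        · rw [if_pos h, if_pos (hdec.mp h)]
        · rw [if_neg h, if_neg (fun hh => h (hdec.mpr hh))]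
      rw [heq] at h1
      exact Set.disjoint_left.mp (hpack s hs.1 s' hs'.1 hne) h1 h2
  set T : Finset (Fin d → ℝ) := hTfin.toFinset with hT
  have hmemT : ∀ s, s ∈ T ↔ s ∈ S ∧ ∃ x, x ∈ cube s ∧ x ∈ cube u := by
    intro s
    rw [hT, Set.Finite.mem_toFinset]
    rfl
  have hTS : ∀ s ∈ T, s ∈ S := fun s hs => ((hmemT s).mp hs).1
  have hTb : ∀ s ∈ T, ∀ i, u i - 1 < s i ∧ s i < u i + 1 := by
    intro s hs i
    obtain ⟨-, x, hxs, hxu⟩ := (hmemT s).mp hs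
    obtain ⟨h1, h2⟩ := hxs i
    obtain ⟨h3, h4⟩ := hxu i
    constructor <;> linarith
  have hCT : ∀ x, x ∈ cube u → C x ∈ T := by
    intro x hx
    exact (hmemT _).mpr ⟨hCS x hx, x, hCc x hx, hx⟩
  have huniqT : ∀ x ∈ cube u, ∀ s ∈ T, x ∈ cube s → C x = s :=
    fun x hx s hs hxs => huniq x hx s (hTS s hs) hxs
  -- sign constancy on fibers of ev
  have hsgn : ∀ s ∈ T, ∀ s' ∈ T, (∀ i, ev (s i - u i) = ev (s' i - u i)) →
      (∏ i, sg (s i - u i)) = ∏ i, sg (s' i - u i) := by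
    intro s hs s' hs' hee
    have hdiff : ∀ i, s i - s' i ∈ ({-1, 0, 1} : Set ℝ) := by
      intro i
      simp only [Set.mem_insert_iff, Set.mem_singleton_iff]
      rcases ev_eq_cases (s i - u i) (s' i - u i) (hee i) with ⟨h0, -⟩ | ⟨h1 | h1, -⟩
      · right; left; linarith
      · right; right; linarith
      · left; linarith
    have heven : Even (Finset.univ.filter (fun i => |s i - s' i| = 1)).card :=
      Nat.not_odd_iff_even.mp (Hc s (hTS s hs) s' (hTS s' hs') hdiff)
    have hterm : ∀ i, sg (s i - u i) * sg (s' i - u i)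
        = if |s i - s' i| = 1 then (-1:ℝ) else 1 := by
      intro i
      rcases ev_eq_cases (s i - u i) (s' i - u i) (hee i) with ⟨h0, hsgeq⟩ | ⟨h1, hmm⟩
      · have hx : s i - s' i = 0 := by linarith
        have habs : ¬ |s i - s' i| = 1 := by rw [hx]; norm_num
        rw [if_neg habs, hsgeq]
        exact sg_mul_self _
      · have habs : |s i - s' i| = 1 := by
          rcases h1 with h | h
          · have hx : s i - s' i = 1 := by linarith
            rw [hx]; norm_num
          · have hx : s i - s' i = -1 := by linarith
            rw [hx]; norm_num
        rw [if_pos habs]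
        exact hmm
    have hone : (∏ i, sg (s i - u i)) * (∏ i, sg (s' i - u i)) = 1 := by
      rw [← Finset.prod_mul_distrib]
      rw [Finset.prod_congr rfl (fun i _ => hterm i)]
      rw [Finset.prod_ite, Finset.prod_const, Finset.prod_const, one_pow, mul_one]
      exact Even.neg_one_pow heven
    have hsq : (∏ i, sg (s' i - u i)) * (∏ i, sg (s' i - u i)) = 1 := by
      rw [← Finset.prod_mul_distrib]
      rw [Finset.prod_congr rfl (fun i _ => sg_mul_self (s' i - u i))]
      exact Finset.prod_const_one
    calc (∏ i, sg (s i - u i))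
        = ((∏ i, sg (s i - u i)) * (∏ i, sg (s' i - u i))) * (∏ i, sg (s' i - u i)) := by
          rw [mul_assoc, hsq, mul_one]
      _ = ∏ i, sg (s' i - u i) := by rw [hone, one_mul]
  -- main induction: all proper fibers are empty
  have star : ∀ Z : Finset (Fin d), Z ≠ Finset.univ →
      ∀ y : Fin d → ℝ, (∀ i, i ∉ Z → 0 < y i ∧ y i < 1) →
      ∀ s ∈ T, ¬ ((∀ i ∈ Z, s i - u i = 0) ∧ (∀ i ∉ Z, ev (s i - u i) = y i)) := by
    intro Z
    induction Z using Finset.strongInductionOn with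
    | _ Z IH =>
    intro hZu y hy s hsT hQ
    have hid := ident u T C (fun x hx => hCc x hx) (fun x hx => hCT x hx) huniqT hTb Z hZu y hy
    have hF : ∀ t ∈ T,
        (∏ i, (if i ∈ Z then (if 0 ≤ t i - u i then (1:ℝ) else 0)
          else (if ev (t i - u i) = y i then sg (t i - u i) else 0)))
        = if ((∀ i ∈ Z, t i - u i = 0) ∧ (∀ i ∉ Z, ev (t i - u i) = y i))
            then (∏ i, sg (t i - u i)) else 0 := by
      intro t htT
      by_cases hQt : (∀ i ∈ Z, t i - u i = 0) ∧ (∀ i ∉ Z, ev (t i - u i) = y i)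
      · rw [if_pos hQt]
        apply Finset.prod_congr rfl
        intro i _
        by_cases hiZ : i ∈ Z
        · rw [if_pos hiZ, hQt.1 i hiZ]
          norm_num [sg]
        · rw [if_neg hiZ, if_pos (hQt.2 i hiZ)]
      · rw [if_neg hQt]
        by_cases h1 : (∀ i ∈ Z, 0 ≤ t i - u i) ∧ (∀ i ∉ Z, ev (t i - u i) = y i)
        · exfalso
          have hW : ∃ i0 ∈ Z, 0 < t i0 - u i0 := by
            by_contra hno
            push_neg at hno
            exact hQt ⟨fun i hi => le_antisymm (hno i hi) (h1.1 i hi), h1.2⟩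
          obtain ⟨i0, hi0Z, hi0pos⟩ := hW
          have hi0W : i0 ∈ Z.filter (fun i => 0 < t i - u i) :=
            Finset.mem_filter.mpr ⟨hi0Z, hi0pos⟩
          have hZ'ss : Z \ Z.filter (fun i => 0 < t i - u i) ⊂ Z :=
            Finset.sdiff_ssubset (Finset.filter_subset _ _) ⟨i0, hi0W⟩
          have hZ'u : Z \ Z.filter (fun i => 0 < t i - u i) ≠ Finset.univ := by
            intro h
            apply hZu
            apply Finset.eq_univ_iff_forall.mpr
            intro i
            have hi : i ∈ Z \ Z.filter (fun i => 0 < t i - u i) := h ▸ Finset.mem_univ i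
            exact (Finset.mem_sdiff.mp hi).1
          have hy' : ∀ i, i ∉ Z \ Z.filter (fun i => 0 < t i - u i) →
              0 < (if i ∈ Z then ev (t i - u i) else y i)
              ∧ (if i ∈ Z then ev (t i - u i) else y i) < 1 := by
            intro i hiZ'
            by_cases hiZ : i ∈ Z
            · have hiW : i ∈ Z.filter (fun i => 0 < t i - u i) := by
                by_contra hiW
                exact hiZ' (Finset.mem_sdiff.mpr ⟨hiZ, hiW⟩)
              have hpos : 0 < t i - u i := (Finset.mem_filter.mp hiW).2
              have hb := hTb t htT i
              rw [if_pos hiZ]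
              unfold ev
              rw [if_neg (not_le.mpr hpos)]
              exact ⟨hpos, by linarith [hb.2]⟩
            · rw [if_neg hiZ]
              exact hy i hiZ
          apply IH _ hZ'ss hZ'u _ hy' t htT
          constructor
          · intro i hiZ'
            obtain ⟨hiZ, hiW⟩ := Finset.mem_sdiff.mp hiZ'
            have h0 := h1.1 i hiZ
            have hnp : ¬ 0 < t i - u i := fun hc => hiW (Finset.mem_filter.mpr ⟨hiZ, hc⟩)
            linarith
          · intro i hiZ'
            by_cases hiZ : i ∈ Z
            · rw [if_pos hiZ]
            · rw [if_neg hiZ]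
              exact h1.2 i hiZ
        · by_cases h2 : ∀ i ∈ Z, 0 ≤ t i - u i
          · have h3 : ¬ ∀ i ∉ Z, ev (t i - u i) = y i := fun hh => h1 ⟨h2, hh⟩
            push_neg at h3
            obtain ⟨i0, hi0, hne0⟩ := h3
            apply Finset.prod_eq_zero (Finset.mem_univ i0)
            rw [if_neg hi0, if_neg hne0]
          · push_neg at h2
            obtain ⟨i0, hi0, hneg⟩ := h2
            apply Finset.prod_eq_zero (Finset.mem_univ i0)
            rw [if_pos hi0, if_neg (not_le.mpr hneg)]
    have hconst : ∀ t ∈ T.filter (fun t =>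
        (∀ i ∈ Z, t i - u i = 0) ∧ (∀ i ∉ Z, ev (t i - u i) = y i)),
        (∏ i, sg (t i - u i)) = ∏ i, sg (s i - u i) := by
      intro t ht
      obtain ⟨htT, hQt⟩ := Finset.mem_filter.mp ht
      apply hsgn t htT s hsT
      intro i
      by_cases hiZ : i ∈ Z
      · rw [hQt.1 i hiZ, hQ.1 i hiZ]
      · rw [hQt.2 i hiZ, hQ.2 i hiZ]
    have hzero : ((T.filter (fun t =>
        (∀ i ∈ Z, t i - u i = 0) ∧ (∀ i ∉ Z, ev (t i - u i) = y i))).card : ℝ)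
        * (∏ i, sg (s i - u i)) = 0 := by
      calc ((T.filter (fun t =>
            (∀ i ∈ Z, t i - u i = 0) ∧ (∀ i ∉ Z, ev (t i - u i) = y i))).card : ℝ)
            * (∏ i, sg (s i - u i))
          = ∑ t ∈ T.filter (fun t =>
              (∀ i ∈ Z, t i - u i = 0) ∧ (∀ i ∉ Z, ev (t i - u i) = y i)),
              (∏ i, sg (t i - u i)) := by
            rw [Finset.sum_congr rfl hconst, Finset.sum_const, nsmul_eq_mul]
        _ = ∑ t ∈ T, (if ((∀ i ∈ Z, t i - u i = 0) ∧ (∀ i ∉ Z, ev (t i - u i) = y i))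
              then (∏ i, sg (t i - u i)) else 0) := Finset.sum_filter _ _
        _ = ∑ t ∈ T, (∏ i, (if i ∈ Z then (if 0 ≤ t i - u i then (1:ℝ) else 0)
              else (if ev (t i - u i) = y i then sg (t i - u i) else 0))) :=
            (Finset.sum_congr rfl hF).symm
        _ = 0 := hid
    have hsmem : s ∈ T.filter (fun t =>
        (∀ i ∈ Z, t i - u i = 0) ∧ (∀ i ∉ Z, ev (t i - u i) = y i)) :=
      Finset.mem_filter.mpr ⟨hsT, hQ⟩
    have hprodne : (∏ i, sg (s i - u i)) ≠ 0 := by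
      rw [Finset.prod_ne_zero_iff]
      intro i _
      unfold sg
      split <;> norm_num
    rcases mul_eq_zero.mp hzero with h | h
    · exact Finset.card_ne_zero_of_mem hsmem (Nat.cast_eq_zero.mp h)
    · exact hprodne h
  -- conclude
  have hs0T : C u ∈ T := hCT u huC
  by_cases hZ0u : Finset.univ.filter (fun i => C u i - u i = 0) = Finset.univ
  · apply hu
    have hequ : C u = u := by
      funext i
      have hi : i ∈ Finset.univ.filter (fun i => C u i - u i = 0) := by
        rw [hZ0u]
        exact Finset.mem_univ i
      have := (Finset.mem_filter.mp hi).2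
      linarith
    rw [← hequ]
    exact hCS u huC
  · apply star (Finset.univ.filter (fun i => C u i - u i = 0)) hZ0u
      (fun i => ev (C u i - u i)) ?_ (C u) hs0T ?_
    · intro i hi
      have hne : C u i - u i ≠ 0 := by
        intro h
        exact hi (Finset.mem_filter.mpr ⟨Finset.mem_univ i, h⟩)
      have hb := hTb (C u) hs0T i
      show (0:ℝ) < ev (C u i - u i) ∧ ev (C u i - u i) < 1
      unfold ev
      by_cases h : C u i - u i ≤ 0
      · rw [if_pos h]
        have hlt : C u i - u i < 0 := lt_of_le_of_ne h hne
        constructor <;> linarith [hb.1]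
      · rw [if_neg h]
        push_neg at h
        constructor
        · exact h
        · linarith [hb.2]
    · exact ⟨fun i hi => (Finset.mem_filter.mp hi).2, fun i _ => rfl⟩
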